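/- Let N ≥ 2, let t₁, …, t_N ∈ ℂ be distinct, set P(z) := ∏_{i=1}^N (z − t_i), and let q₁, …, q_{N−1} ∈ ℂ be distinct complex numbers such that P′(z) = N·∏_{k=1}^{N−1}(z − q_k). Then for all indices i, j, m ∈ {1, …, N} with i ≠ j and m ≠ j, the following identity holds: Σ_{k=1}^{N−1} ∏_{s ≠ i, j}(q_k − t_s) / [ (q_k − t_m)·∏_{l ≠ k}(q_k − q_l) ] equals −N/(t_i − t_j) when m = i, and equals 0 when m ∉ {i, j}. (All denominators are nonzero: q_k ≠ t_m since P′(t_m) = ∏_{s≠m}(t_m − t_s) ≠ 0. These are the residue identities (s8)–(s9) underlying the equivalence between the Schlesinger equations ∂_i A_j = [A_i, A_j]/(t_i − t_j) and the flows ∂_{T_k} A_j in the critical-value coordinates T_k.) -/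

import Mathlib

open Finset Polynomial

lemma lag_sum {M : ℕ} (q : Fin M → ℂ) (hq : Function.Injective q) (A : Polynomial ℂ)
    (hA : A.degree < (M : WithBot ℕ)) (x : ℂ) (hx : ∀ l, x ≠ q l) :
    (∑ l, A.eval (q l) / ((q l - x) * ∏ l' ∈ Finset.univ.erase l, (q l - q l')))
      = - A.eval x / ∏ l, (x - q l) := by
  have hd : ∀ l : Fin M, (∏ l' ∈ univ.erase l, (q l - q l')) ≠ 0 := by
    intro l
    refine Finset.prod_ne_zero_iff.2 fun l' hl' => sub_ne_zero.2 fun h => ?_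
    exact (mem_erase.1 hl').1 (hq h.symm)
  have hxq : ∀ l, x - q l ≠ 0 := fun l => sub_ne_zero.2 (hx l)
  have hPr : (∏ l, (x - q l)) ≠ 0 :=
    Finset.prod_ne_zero_iff.2 fun l _ => hxq l
  have hcard : ((Finset.univ : Finset (Fin M)).card : WithBot ℕ) = (M : WithBot ℕ) := by simp
  have hint := Lagrange.eq_interpolate (v := q) (f := A) hq.injOn (by rw [hcard]; exact hA)
  have heval : A.eval x
      = ∑ l, A.eval (q l) * ((∏ l' ∈ univ.erase l, (q l - q l'))⁻¹
          * ∏ l' ∈ univ.erase l, (x - q l')) := by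
    conv_lhs => rw [hint]
    rw [Lagrange.interpolate_apply, eval_finset_sum]
    refine Finset.sum_congr rfl fun l _ => ?_
    rw [eval_mul, eval_C, Lagrange.basis, eval_prod]
    congr 1
    rw [← Finset.prod_inv_distrib, ← Finset.prod_mul_distrib]
    refine Finset.prod_congr rfl fun l' _ => ?_
    simp [Lagrange.basisDivisor]
  rw [neg_div, eq_comm, neg_eq_iff_eq_neg, div_eq_iff hPr, heval, neg_mul, Finset.sum_mul,
    ← Finset.sum_neg_distrib]
  refine Finset.sum_congr rfl fun l _ => ?_
  rw [← Finset.mul_prod_erase _ _ (Finset.mem_univ l)]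
  field_simp [hd l, hxq l]
  rw [eq_comm, neg_eq_iff_eq_neg, div_eq_iff (sub_ne_zero.2 fun h => hx l h.symm)]
  ring

/-- Residue identities (s8)–(s9) underlying the equivalence between the Schlesinger
equations and the flows in the critical-value coordinates: with `P(z) = ∏(z − t_i)`,
`P′(z) = N·∏(z − q_k)`, for `i ≠ j` and `m ≠ j`,
`Σ_k ∏_{s≠i,j}(q_k − t_s) / ((q_k − t_m)·∏_{l≠k}(q_k − q_l))` equals `−N/(t_i − t_j)`
if `m = i` and `0` if `m ∉ {i, j}`. -/
theorem stmt_9 (N : ℕ) (hN : 2 ≤ N)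
    (t : Fin N → ℂ) (ht : Function.Injective t)
    (q : Fin (N - 1) → ℂ) (hq : Function.Injective q)
    (hP' : ∀ z : ℂ,
      (∑ i, ∏ s ∈ Finset.univ.erase i, (z - t s)) = (N : ℂ) * ∏ l, (z - q l)) :
    ∀ i j m : Fin N, i ≠ j → m ≠ j →
      (∑ l, (∏ s ∈ (Finset.univ.erase i).erase j, (q l - t s)) /
            ((q l - t m) * ∏ l' ∈ Finset.univ.erase l, (q l - q l')))
        = if m = i then -(N : ℂ) / (t i - t j) else 0 := by
  intro i j m hij hmj
  have hNC : (N : ℂ) ≠ 0 := Nat.cast_ne_zero.2 (by omega)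
  -- P'(t m) computation
  have hPm : ∀ m : Fin N, (∏ s ∈ univ.erase m, (t m - t s)) = (N : ℂ) * ∏ l, (t m - q l) := by
    intro m
    rw [← hP' (t m)]
    rw [Finset.sum_eq_single m]
    · intro b _ hbm
      exact Finset.prod_eq_zero (mem_erase.2 ⟨hbm.symm, mem_univ m⟩) (sub_self _)
    · intro h; exact absurd (mem_univ m) h
  have hEm : ∀ m : Fin N, (∏ s ∈ univ.erase m, (t m - t s)) ≠ 0 := by
    intro m
    refine Finset.prod_ne_zero_iff.2 fun s hs => sub_ne_zero.2 fun h => ?_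
    exact (mem_erase.1 hs).1 (ht h.symm)
  have hx : ∀ l, t m ≠ q l := by
    intro l h
    apply hEm m
    rw [hPm m]
    rw [Finset.prod_eq_zero (Finset.mem_univ l) (by rw [← h, sub_self]), mul_zero]
  -- the polynomial A
  set A : Polynomial ℂ := ∏ s ∈ (univ.erase i).erase j, (Polynomial.X - Polynomial.C (t s))
    with hA
  have hjmem : j ∈ univ.erase i := mem_erase.2 ⟨hij.symm, mem_univ j⟩
  have hcard2 : ((univ.erase i).erase j).card = N - 2 := by
    rw [card_erase_of_mem hjmem, card_erase_of_mem (mem_univ i), card_univ, Fintype.card_fin]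
    omega
  have hdeg : A.degree < ((N - 1 : ℕ) : WithBot ℕ) := by
    have h1 : A.degree = ((N - 2 : ℕ) : WithBot ℕ) := by
      rw [hA, degree_prod]
      simp only [degree_X_sub_C, Finset.sum_const, nsmul_eq_mul, mul_one, hcard2]
    rw [h1, Nat.cast_withBot, Nat.cast_withBot, WithBot.coe_lt_coe]
    omega
  have hAeval : ∀ y : ℂ, A.eval y = ∏ s ∈ (univ.erase i).erase j, (y - t s) := by
    intro y
    rw [hA]
    simp only [eval_prod, eval_sub, eval_X, eval_C]
  have key := lag_sum q hq A hdeg (t m) hx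
  simp_rw [hAeval] at key
  rw [key]
  have hprodq : (∏ l, (t m - q l)) = (∏ s ∈ univ.erase m, (t m - t s)) / (N : ℂ) := by
    rw [hPm m, mul_div_assoc]
    field_simp
  rw [hprodq]
  by_cases hmi : m = i
  · subst hmi
    rw [if_pos rfl]
    have hsplit : (∏ s ∈ univ.erase m, (t m - t s))
        = (t m - t j) * ∏ s ∈ (univ.erase m).erase j, (t m - t s) :=
      (Finset.mul_prod_erase _ _ hjmem).symm
    have hAne : (∏ s ∈ (univ.erase m).erase j, (t m - t s)) ≠ 0 := by
      intro h0
      apply hEm m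
      rw [hsplit, h0, mul_zero]
    have htj : t m - t j ≠ 0 := sub_ne_zero.2 fun h => hij (ht h)
    rw [hsplit]
    field_simp
  · rw [if_neg hmi]
    have : (∏ s ∈ (univ.erase i).erase j, (t m - t s)) = 0 :=
      Finset.prod_eq_zero (mem_erase.2 ⟨hmj, mem_erase.2 ⟨hmi, mem_univ m⟩⟩) (sub_self _)
    rw [this]
    simp
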